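/- For any predicted mean ŷ ∈ ℝ, standard deviation σ̂ > 0, multiplicative correction q̂ ≥ 1, and any point ẏ ∈ ℝ, the Gaussian negative log likelihood of ẏ under N(ŷ, (σ̂q̂)²) is less than or equal to that under N(ŷ, σ̂²) whenever |ẏ − ŷ| ≥ σ̂ q̂ √(log(q̂²)·q̂²/(q̂²−1)) (and for q̂ = 1 they are equal). -/

import Mathlib

/-- Inflating the standard deviation by a conformal factor `qhat ≥ 1` lowers the Gaussian NLL
for sufficiently distant points: if `|ydot − yhat| ≥ sigmahatqhat√(log(qhat²)·qhat²/(qhat²−1))`, then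
`NLL(ydot; yhat, (sigmahatqhat)²) ≤ NLL(ydot; yhat, sigmahat²)`, with equality of NLLs when `qhat = 1`. -/
theorem inflated_nll_le (yhat sigmahat qhat ydot : ℝ) (hσ : 0 < sigmahat) (hq : 1 ≤ qhat) :
    ( |ydot - yhat| ≥ sigmahat * qhat * Real.sqrt (Real.log (qhat ^ 2) * qhat ^ 2 / (qhat ^ 2 - 1)) →
      (ydot - yhat) ^ 2 / (2 * (sigmahat * qhat) ^ 2) + Real.log (sigmahat * qhat) + (1 / 2) * Real.log (2 * Real.pi)
        ≤ (ydot - yhat) ^ 2 / (2 * sigmahat ^ 2) + Real.log sigmahat + (1 / 2) * Real.log (2 * Real.pi) )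
    ∧
    ( qhat = 1 →
      (ydot - yhat) ^ 2 / (2 * (sigmahat * qhat) ^ 2) + Real.log (sigmahat * qhat) + (1 / 2) * Real.log (2 * Real.pi)
        = (ydot - yhat) ^ 2 / (2 * sigmahat ^ 2) + Real.log sigmahat + (1 / 2) * Real.log (2 * Real.pi) ) := by
  constructor
  · intro hdist
    rcases eq_or_lt_of_le hq with hq1 | hq1
    · simp [← hq1]
    -- q > 1 case
    set x := ydot - yhat with hx
    have hq0 : 0 < qhat := lt_trans one_pos hq1
    have hq2 : (1:ℝ) < qhat ^ 2 := by nlinarith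
    have hT : 0 ≤ Real.log (qhat ^ 2) * qhat ^ 2 / (qhat ^ 2 - 1) := by
      have h1 : 0 ≤ Real.log (qhat ^ 2) := Real.log_nonneg hq2.le
      have : 0 < qhat ^ 2 - 1 := by linarith
      positivity
    have hx2 : x ^ 2 ≥ (sigmahat * qhat) ^ 2 * (Real.log (qhat ^ 2) * qhat ^ 2 / (qhat ^ 2 - 1)) := by
      have h := mul_self_le_mul_self (by positivity) hdist
      have hs : Real.sqrt (Real.log (qhat ^ 2) * qhat ^ 2 / (qhat ^ 2 - 1)) *
          Real.sqrt (Real.log (qhat ^ 2) * qhat ^ 2 / (qhat ^ 2 - 1)) =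
          Real.log (qhat ^ 2) * qhat ^ 2 / (qhat ^ 2 - 1) := Real.mul_self_sqrt hT
      calc x ^ 2 = |x| * |x| := by rw [abs_mul_abs_self]; ring
        _ ≥ _ := h
        _ = (sigmahat * qhat) ^ 2 * (Real.log (qhat ^ 2) * qhat ^ 2 / (qhat ^ 2 - 1)) := by
            rw [mul_mul_mul_comm, hs]; ring
    -- key: log q ≤ x²(q²-1)/(2σ²q²)
    have hlogq : Real.log qhat ≤ x ^ 2 * (qhat ^ 2 - 1) / (2 * (sigmahat * qhat) ^ 2) := by
      have hlog2 : Real.log (qhat ^ 2) = 2 * Real.log qhat := by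
        rw [Real.log_pow]; push_cast; ring
      have hd : 0 < qhat ^ 2 - 1 := by linarith
      have hsq : 0 < (sigmahat * qhat) ^ 2 := by positivity
      have key : (sigmahat * qhat) ^ 2 * (Real.log (qhat ^ 2) * qhat ^ 2 / (qhat ^ 2 - 1)) * (qhat ^ 2 - 1)
          = (sigmahat * qhat) ^ 2 * Real.log (qhat ^ 2) * qhat ^ 2 := by
        field_simp
      rw [le_div_iff₀ (by positivity : (0:ℝ) < 2 * (sigmahat * qhat) ^ 2)]
      have h2 := mul_le_mul_of_nonneg_right hx2 hd.le
      rw [key, hlog2] at h2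
      nlinarith [mul_nonneg (mul_nonneg (sq_nonneg (sigmahat * qhat)) (Real.log_nonneg hq)) hd.le]
    have hlogmul : Real.log (sigmahat * qhat) = Real.log sigmahat + Real.log qhat :=
      Real.log_mul (ne_of_gt hσ) (ne_of_gt hq0)
    have hdiff : x ^ 2 / (2 * sigmahat ^ 2) - x ^ 2 / (2 * (sigmahat * qhat) ^ 2)
        = x ^ 2 * (qhat ^ 2 - 1) / (2 * (sigmahat * qhat) ^ 2) := by
      field_simp
    rw [hlogmul]
    linarith [hlogq, hdiff]
  · intro h; simp [h]
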